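/- On the interval (0, π/(2·√6)), the functions f1(t) = −√2/3 (constant), f2(t) = (√3/36)·sin(2·√6·t), f3(t) = 0, F(t) = (√3/36)·sin(√6·t) solve system (F) with μ = 2, satisfy the constraint (C) at every point, and satisfy f1 < 0, F > 0 and F'² − (f2' + f1/4)·(f3' − f1/4) > 0 at every point. (These are the coefficient functions of the homogeneous nearly Kähler structure on S³×S³ = SU₂³/SU₂ along a normal geodesic for the SU(2)×SU(2)-action.) -/

import Mathlib

private lemma hd_csin (c k t : ℝ) :
    HasDerivAt (fun u : ℝ => c * Real.sin (k * u)) (c * k * Real.cos (k * t)) t := by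
  have h : HasDerivAt (fun u : ℝ => k * u) k t := by
    simpa using (hasDerivAt_id t).const_mul k
  have := ((Real.hasDerivAt_sin (k * t)).comp t h).const_mul c
  have h2 : c * (Real.cos (k * t) * k) = c * k * Real.cos (k * t) := by ring
  simpa [Function.comp, h2] using this

private lemma hd_ccos (c k t : ℝ) :
    HasDerivAt (fun u : ℝ => c * Real.cos (k * u)) (-(c * k * Real.sin (k * t))) t := by
  have h : HasDerivAt (fun u : ℝ => k * u) k t := by
    simpa using (hasDerivAt_id t).const_mul k
  have h' := ((Real.hasDerivAt_cos (k * t)).comp t h).const_mul c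
  rw [show -(c * k * Real.sin (k * t)) = c * (-Real.sin (k * t) * k) by ring]
  simpa [Function.comp] using h'

/-- Podestà–Spiro: the coefficient functions of the homogeneous nearly Kähler structure
on `S³×S³ = SU₂³/SU₂` along a normal geodesic solve system (F) with `μ = 2`, satisfy the
constraint (C), and satisfy the positivity conditions on `(0, π/(2√6))`. -/
theorem stmt_8
    (μ : ℝ) (hμ : μ = 2)
    (f1 f2 f3 F : ℝ → ℝ)
    (hf1 : ∀ t, f1 t = -(Real.sqrt 2 / 3))
    (hf2 : ∀ t, f2 t = (Real.sqrt 3 / 36) * Real.sin (2 * Real.sqrt 6 * t))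
    (hf3 : ∀ t, f3 t = 0)
    (hF : ∀ t, F t = (Real.sqrt 3 / 36) * Real.sin (Real.sqrt 6 * t)) :
    ∀ t ∈ Set.Ioo 0 (Real.pi / (2 * Real.sqrt 6)),
      (deriv (fun u => (deriv f2 u + f1 u / 4) * f1 u) t + 12 * μ * f1 t * f2 t = 0 ∧
       deriv (fun u => (deriv f3 u - f1 u / 4) * f1 u) t + 12 * μ * f1 t * f3 t = 0 ∧
       deriv (fun u => deriv F u * f1 u) t - 4 * F t / f1 t + 12 * μ * f1 t * F t = 0 ∧
       f1 t * (deriv f2 t - deriv f3 t + f1 t / 2) + 48 * μ * (f2 t * f3 t - F t ^ 2) = 0) ∧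
      4 * F t ^ 2 -
        ((deriv F t) ^ 2 - (deriv f2 t + f1 t / 4) * (deriv f3 t - f1 t / 4)) * f1 t ^ 2 = 0 ∧
      f1 t < 0 ∧
      0 < F t ∧
      0 < (deriv F t) ^ 2 - (deriv f2 t + f1 t / 4) * (deriv f3 t - f1 t / 4) := by
  subst hμ
  intro t ht
  obtain ⟨ht0, htπ⟩ := ht
  set A := Real.sqrt 2 with hA
  set B := Real.sqrt 3 with hB
  set K := Real.sqrt 6 with hK
  have e2 : A ^ 2 = 2 := Real.sq_sqrt (by norm_num)
  have e3 : B ^ 2 = 3 := Real.sq_sqrt (by norm_num)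
  have e6 : K ^ 2 = 6 := Real.sq_sqrt (by norm_num)
  have e23 : A * B = K := by
    rw [hA, hB, hK, ← Real.sqrt_mul (by norm_num : (0:ℝ) ≤ 2)]
    norm_num
  have hApos : 0 < A := Real.sqrt_pos.mpr (by norm_num)
  have hBpos : 0 < B := Real.sqrt_pos.mpr (by norm_num)
  have hKpos : 0 < K := Real.sqrt_pos.mpr (by norm_num)
  have ha : (-(A / 3) : ℝ) ≠ 0 := by
    intro h; nlinarith
  -- function equalities
  have hf1' : f1 = fun _ : ℝ => -(A / 3) := funext hf1
  have hf2' : f2 = fun u : ℝ => B / 36 * Real.sin (2 * K * u) := funext hf2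
  have hf3' : f3 = fun _ : ℝ => (0 : ℝ) := funext hf3
  have hF' : F = fun u : ℝ => B / 36 * Real.sin (K * u) := funext hF
  -- first derivatives
  have hdf2 : ∀ u : ℝ, deriv f2 u = B / 36 * (2 * K) * Real.cos (2 * K * u) := by
    intro u; rw [hf2']; exact (hd_csin (B / 36) (2 * K) u).deriv
  have hdf3 : ∀ u : ℝ, deriv f3 u = (0 : ℝ) := by
    intro u; rw [hf3']; exact deriv_const u 0
  have hdF : ∀ u : ℝ, deriv F u = B / 36 * K * Real.cos (K * u) := by
    intro u; rw [hF']; exact (hd_csin (B / 36) K u).deriv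
  -- second-level derivatives
  have hi1 : deriv (fun u => (deriv f2 u + f1 u / 4) * f1 u) t
      = -(B / 36 * (2 * K) * (2 * K) * Real.sin (2 * K * t)) * (-(A / 3)) := by
    have heq : (fun u => (deriv f2 u + f1 u / 4) * f1 u)
        = fun u : ℝ => (B / 36 * (2 * K) * Real.cos (2 * K * u) + -(A / 3) / 4) * (-(A / 3)) := by
      funext u; rw [hdf2 u, hf1 u]
    rw [heq]
    exact (((hd_ccos (B / 36 * (2 * K)) (2 * K) t).add_const (-(A / 3) / 4)).mul_const
      (-(A / 3))).deriv
  have hi2 : deriv (fun u => (deriv f3 u - f1 u / 4) * f1 u) t = 0 := by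
    have heq : (fun u => (deriv f3 u - f1 u / 4) * f1 u)
        = fun _ : ℝ => ((0 : ℝ) - -(A / 3) / 4) * (-(A / 3)) := by
      funext u; rw [hdf3 u, hf1 u]
    rw [heq]; exact deriv_const t _
  have hi3 : deriv (fun u => deriv F u * f1 u) t
      = -(B / 36 * K * K * Real.sin (K * t)) * (-(A / 3)) := by
    have heq : (fun u => deriv F u * f1 u)
        = fun u : ℝ => (B / 36 * K * Real.cos (K * u)) * (-(A / 3)) := by
      funext u; rw [hdF u, hf1 u]
    rw [heq]
    exact ((hd_ccos (B / 36 * K) K t).mul_const (-(A / 3))).deriv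
  -- trig identities
  have psin : Real.sin (K * t) ^ 2 + Real.cos (K * t) ^ 2 = 1 := Real.sin_sq_add_cos_sq _
  have hs2 : Real.sin (2 * K * t) = 2 * Real.sin (K * t) * Real.cos (K * t) := by
    rw [mul_assoc]; exact Real.sin_two_mul (K * t)
  have hc2 : Real.cos (2 * K * t) = 1 - 2 * Real.sin (K * t) ^ 2 := by
    rw [mul_assoc, Real.cos_two_mul]; nlinarith [psin]
  set S := Real.sin (K * t) with hS
  set C := Real.cos (K * t) with hC
  have hSpos : 0 < S := by
    apply Real.sin_pos_of_pos_of_lt_pi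
    · positivity
    · have h1 : K * t < K * (Real.pi / (2 * K)) := mul_lt_mul_of_pos_left htπ hKpos
      have h2 : K * (Real.pi / (2 * K)) = Real.pi / 2 := by
        field_simp
      have := Real.pi_pos
      nlinarith [h1, h2]
  have hkey : (deriv F t) ^ 2 - (deriv f2 t + f1 t / 4) * (deriv f3 t - f1 t / 4)
      = S ^ 2 / 24 := by
    rw [hdF t, hdf2 t, hdf3 t, hf1 t, hc2]
    linear_combination (1 / 144 : ℝ) * e2 + (K ^ 2 / 1296 * C ^ 2) * e3
      + (C ^ 2 / 432 - (1 - 2 * S ^ 2) / 216) * e6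
      + (-(K / 216) * (1 - 2 * S ^ 2)) * e23 + (1 / 72 : ℝ) * psin
  refine ⟨⟨?_, ?_, ?_, ?_⟩, ?_, ?_, ?_, ?_⟩
  · rw [hi1, hf1 t, hf2 t, hs2]
    linear_combination (2 * A * B * S * C / 27) * e6
  · rw [hi2, hf1 t, hf3 t]; ring
  · rw [hi3, hf1 t, hF t]
    have hdiv : (4 * (B / 36 * S)) / (-(A / 3)) = -(B * S * A / 6) := by
      rw [div_eq_iff ha]
      linear_combination (-(B * S / 18)) * e2
    rw [hdiv]
    linear_combination (A * B * S / 108) * e6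
  · rw [hf1 t, hdf2 t, hdf3 t, hf2 t, hf3 t, hF t, hs2, hc2]
    linear_combination (-(K / 54) * (1 - 2 * S ^ 2)) * e23
      + (-(1 - 2 * S ^ 2) / 54) * e6 + (1 / 18 : ℝ) * e2 + (-(2 / 27) * S ^ 2) * e3
  · rw [hkey, hF t, hf1 t]
    linear_combination (S ^ 2 / 324) * e3 + (-(S ^ 2) / 216) * e2
  · rw [hf1 t]; nlinarith
  · rw [hF t]; positivity
  · rw [hkey]; positivity
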